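/- (Population double robustness of the AIPW functional.) Let (Ω, 𝓕, P) be a probability space, X : Ω → ℝ^{p₀} a measurable covariate vector, Y : Ω → ℝ an integrable outcome, and δ : Ω → {0,1} a response indicator satisfying missing at random (MAR): δ and Y are conditionally independent given σ(X). Let π* : ℝ^{p₀} → [c, 1] be measurable with constant c > 0 and m* : ℝ^{p₀} → ℝ be measurable, with m*(X) and Y/π*(X) integrable. If either (i) π*(X) = E[δ | σ(X)] almost surely, or (ii) m*(X) = E[Y | σ(X)] almost surely, then E[ m*(X) + (δ/π*(X)) ( Y − m*(X) ) ] = E[Y]. -/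

import Mathlib

open MeasureTheory ProbabilityTheory

open Set MeasurableSpace in
lemma aux_ae_indepFun {Ω : Type*} {m' : MeasurableSpace Ω} [mΩ : MeasurableSpace Ω]
    [StandardBorelSpace Ω] (hm' : m' ≤ mΩ) (μ : Measure Ω) [IsProbabilityMeasure μ]
    {f g : Ω → ℝ} (hf : Measurable f) (hg : Measurable g)
    (h : CondIndepFun m' hm' f g μ) :
    ∀ᵐ ω ∂μ, IndepFun f g (condExpKernel μ m' ω) := by
  have h' := (Kernel.indepFun_iff_measure_inter_preimage_eq_mul).mp h
  have h2 : ∀ᵐ ω ∂μ, ∀ (q r : ℚ),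
      condExpKernel μ m' ω (f ⁻¹' Iio (q : ℝ) ∩ g ⁻¹' Iio (r : ℝ))
        = condExpKernel μ m' ω (f ⁻¹' Iio (q : ℝ))
          * condExpKernel μ m' ω (g ⁻¹' Iio (r : ℝ)) := by
    rw [ae_all_iff]
    intro q
    rw [ae_all_iff]
    intro r
    exact ae_of_ae_trim hm' (h' _ _ measurableSet_Iio measurableSet_Iio)
  filter_upwards [h2] with ω hω
  set ν := condExpKernel μ m' ω with hν
  have hprob : IsProbabilityMeasure ν := inferInstance
  set p1 : Set (Set Ω) := preimage f '' (⋃ a : ℚ, {Iio (a : ℝ)}) with hp1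
  set p2 : Set (Set Ω) := preimage g '' (⋃ a : ℚ, {Iio (a : ℝ)}) with hp2
  have hpi : IsPiSystem (⋃ a : ℚ, {Iio (a : ℝ)}) := Real.isPiSystem_Iio_rat
  have hpi1 : IsPiSystem p1 := by
    rintro s ⟨s', hs', rfl⟩ t ⟨t', ht', rfl⟩ hst
    obtain ⟨x, hx1, hx2⟩ := hst
    exact ⟨s' ∩ t', hpi s' hs' t' ht' ⟨f x, hx1, hx2⟩, (preimage_inter).symm⟩
  have hpi2 : IsPiSystem p2 := by
    rintro s ⟨s', hs', rfl⟩ t ⟨t', ht', rfl⟩ hst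
    obtain ⟨x, hx1, hx2⟩ := hst
    exact ⟨s' ∩ t', hpi s' hs' t' ht' ⟨g x, hx1, hx2⟩, (preimage_inter).symm⟩
  have hsets : ∀ s ∈ (⋃ a : ℚ, {Iio (a : ℝ)}), MeasurableSet s := by
    rintro s hs
    simp only [mem_iUnion, mem_singleton_iff] at hs
    obtain ⟨a, rfl⟩ := hs
    exact measurableSet_Iio
  have hindep : ProbabilityTheory.Indep (generateFrom p1) (generateFrom p2) ν := by
    refine IndepSets.indep' ?_ ?_ hpi1 hpi2 ?_
    · rintro s ⟨s', hs', rfl⟩; exact hf (hsets s' hs')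
    · rintro s ⟨s', hs', rfl⟩; exact hg (hsets s' hs')
    · rintro t1 t2 ⟨s', hs', rfl⟩ ⟨t', ht', rfl⟩
      simp only [mem_iUnion, mem_singleton_iff] at hs' ht'
      obtain ⟨q, rfl⟩ := hs'
      obtain ⟨r, rfl⟩ := ht'
      filter_upwards with a
      simpa using hω q r
  have hcg1 : MeasurableSpace.comap f (borel ℝ) = generateFrom p1 := by
    rw [Real.borel_eq_generateFrom_Iio_rat, MeasurableSpace.comap_generateFrom]
  have hcg2 : MeasurableSpace.comap g (borel ℝ) = generateFrom p2 := by
    rw [Real.borel_eq_generateFrom_Iio_rat, MeasurableSpace.comap_generateFrom]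
  show ProbabilityTheory.Indep (MeasurableSpace.comap f _) (MeasurableSpace.comap g _) ν
  rw [show (Real.measurableSpace : MeasurableSpace ℝ) = borel ℝ from rfl, hcg1, hcg2]
  exact hindep

lemma aux_condexp_mul {Ω : Type*} {m' : MeasurableSpace Ω} [mΩ : MeasurableSpace Ω]
    [StandardBorelSpace Ω] (hm' : m' ≤ mΩ) (μ : Measure Ω) [IsProbabilityMeasure μ]
    {f g : Ω → ℝ} (hf : Measurable f) (hg : Measurable g)
    (hfbd : ∀ ω, ‖f ω‖ ≤ 1) (hgint : Integrable g μ)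
    (h : CondIndepFun m' hm' f g μ) :
    μ[fun ω => f ω * g ω | m'] =ᵐ[μ] fun ω => (μ[f | m']) ω * (μ[g | m']) ω := by
  have hfint : Integrable f μ :=
    (integrable_const (1 : ℝ)).mono' hf.aestronglyMeasurable (Filter.Eventually.of_forall hfbd)
  have hfgint : Integrable (fun ω => f ω * g ω) μ :=
    hgint.bdd_mul hf.aestronglyMeasurable (Filter.Eventually.of_forall hfbd)
  have h1 := condExp_ae_eq_integral_condExpKernel hm' hfgint
  have h2 := condExp_ae_eq_integral_condExpKernel hm' hfint
  have h3 := condExp_ae_eq_integral_condExpKernel hm' hgint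
  have h4 := hgint.condExpKernel_ae (m := m')
  have h5 := aux_ae_indepFun hm' μ hf hg h
  filter_upwards [h1, h2, h3, h4, h5] with ω e1 e2 e3 e4 e5
  rw [e1, e2, e3]
  have hprob : IsProbabilityMeasure (condExpKernel μ m' ω) := inferInstance
  have hfint' : Integrable f (condExpKernel μ m' ω) :=
    (integrable_const (1 : ℝ)).mono' hf.aestronglyMeasurable (Filter.Eventually.of_forall hfbd)
  exact IndepFun.integral_mul_eq_mul_integral e5 hf.aestronglyMeasurable hg.aestronglyMeasurable


/-- Population double robustness of the AIPW functional: under MAR, if either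
the working propensity `π*` equals `E[δ | σ(X)]` a.s., or the working
regression `m*` equals `E[Y | σ(X)]` a.s., then the AIPW functional has mean
`E[Y]`. -/
theorem stmt_13 {Ω : Type*} [MeasurableSpace Ω] [StandardBorelSpace Ω]
    (P : Measure Ω) [IsProbabilityMeasure P]
    (p₀ : ℕ) (X : Ω → (Fin p₀ → ℝ)) (hX : Measurable X)
    (Y : Ω → ℝ) (hYmeas : Measurable Y) (hYint : Integrable Y P)
    (δ : Ω → ℝ) (hδmeas : Measurable δ) (hδ01 : ∀ ω, δ ω = 0 ∨ δ ω = 1)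
    (hMAR : CondIndepFun (MeasurableSpace.comap X inferInstance) hX.comap_le δ Y P)
    (c : ℝ) (hc : 0 < c)
    (πstar : (Fin p₀ → ℝ) → ℝ) (hπmeas : Measurable πstar)
    (hπrange : ∀ x, πstar x ∈ Set.Icc c 1)
    (mstar : (Fin p₀ → ℝ) → ℝ) (hmmeas : Measurable mstar)
    (hint1 : Integrable (fun ω => mstar (X ω)) P)
    (hint2 : Integrable (fun ω => Y ω / πstar (X ω)) P)
    (hDR : ((fun ω => πstar (X ω))
        =ᵐ[P] P[δ | MeasurableSpace.comap X inferInstance]) ∨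
      ((fun ω => mstar (X ω))
        =ᵐ[P] P[Y | MeasurableSpace.comap X inferInstance])) :
    ∫ ω, (mstar (X ω) + (δ ω / πstar (X ω)) * (Y ω - mstar (X ω))) ∂P
      = ∫ ω, Y ω ∂P := by
  --
  have h𝓖 : MeasurableSpace.comap X inferInstance ≤ _ := hX.comap_le
  have hXG : Measurable[MeasurableSpace.comap X inferInstance] X := fun s hs => ⟨s, hs, rfl⟩
  have hpc : ∀ ω, c ≤ πstar (X ω) := fun ω => (hπrange (X ω)).1
  have hppos : ∀ ω, 0 < πstar (X ω) := fun ω => lt_of_lt_of_le hc (hpc ω)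
  have hpne : ∀ ω, πstar (X ω) ≠ 0 := fun ω => (hppos ω).ne'
  have hδbd : ∀ ω, ‖δ ω‖ ≤ 1 := by
    intro ω; rcases hδ01 ω with h | h <;> simp [h]
  have hδint : Integrable δ P :=
    (integrable_const (1 : ℝ)).mono' hδmeas.aestronglyMeasurable
      (Filter.Eventually.of_forall hδbd)
  have hδYint : Integrable (fun ω => δ ω * Y ω) P :=
    hYint.bdd_mul hδmeas.aestronglyMeasurable (Filter.Eventually.of_forall hδbd)
  have key : P[fun ω => δ ω * Y ω | MeasurableSpace.comap X inferInstance]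
      =ᵐ[P] fun ω => (P[δ | MeasurableSpace.comap X inferInstance]) ω
          * (P[Y | MeasurableSpace.comap X inferInstance]) ω :=
    aux_condexp_mul h𝓖 P hδmeas hYmeas hδbd hYint hMAR
  have hpinv_meas : Measurable[MeasurableSpace.comap X inferInstance]
      (fun ω => (πstar (X ω))⁻¹) := (hπmeas.comp hXG).inv
  have hMG : Measurable[MeasurableSpace.comap X inferInstance]
      (fun ω => mstar (X ω)) := hmmeas.comp hXG
  have hpinv_bd : ∀ ω, ‖(πstar (X ω))⁻¹‖ ≤ c⁻¹ := by
    intro ω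
    rw [Real.norm_of_nonneg (inv_nonneg.mpr (hppos ω).le)]
    exact inv_anti₀ hc (hpc ω)
  -- integrability of the pieces
  have hT2int : Integrable (fun ω => δ ω / πstar (X ω) * Y ω) P := by
    have h' : Integrable (fun ω => δ ω * (Y ω / πstar (X ω))) P :=
      hint2.bdd_mul hδmeas.aestronglyMeasurable (Filter.Eventually.of_forall hδbd)
    exact h'.congr (Filter.Eventually.of_forall fun ω => by ring)
  have hT3int : Integrable (fun ω => δ ω / πstar (X ω) * mstar (X ω)) P := by
    have hint1' : Integrable (fun ω => c⁻¹ * ‖mstar (X ω)‖) P := hint1.norm.const_mul _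
    refine hint1'.mono' ?_ (Filter.Eventually.of_forall fun ω => ?_)
    · exact ((hδmeas.div (hπmeas.comp hX)).mul (hmmeas.comp hX)).aestronglyMeasurable
    · rw [norm_mul]
      refine mul_le_mul_of_nonneg_right ?_ (norm_nonneg _)
      rw [norm_div, Real.norm_of_nonneg (hppos ω).le]
      calc ‖δ ω‖ / πstar (X ω) ≤ 1 / c := div_le_div₀ zero_le_one (hδbd ω) hc (hpc ω)
        _ = c⁻¹ := one_div c
  -- split the integral
  have split : ∫ ω, (mstar (X ω) + (δ ω / πstar (X ω)) * (Y ω - mstar (X ω))) ∂P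
      = ∫ ω, mstar (X ω) ∂P + (∫ ω, δ ω / πstar (X ω) * Y ω ∂P
          - ∫ ω, δ ω / πstar (X ω) * mstar (X ω) ∂P) := by
    have h' := integral_add hint1 (hT2int.sub hT3int)
    simp only [Pi.sub_apply] at h'
    rw [integral_sub hT2int hT3int] at h'
    rw [← h']
    refine integral_congr_ae (Filter.Eventually.of_forall fun ω => ?_)
    simp only [Pi.sub_apply]
    ring
  -- T2
  have hint2' : Integrable (fun ω => (πstar (X ω))⁻¹ * (δ ω * Y ω)) P :=
    hδYint.bdd_mul ((hπmeas.comp hX).inv).aestronglyMeasurable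
      (Filter.Eventually.of_forall hpinv_bd)
  have hT2eq : ∫ ω, δ ω / πstar (X ω) * Y ω ∂P
      = ∫ ω, (πstar (X ω))⁻¹ * ((P[δ | MeasurableSpace.comap X inferInstance]) ω
          * (P[Y | MeasurableSpace.comap X inferInstance]) ω) ∂P := by
    have hpull : P[fun ω => (πstar (X ω))⁻¹ * (δ ω * Y ω) | MeasurableSpace.comap X inferInstance]
        =ᵐ[P] fun ω => (πstar (X ω))⁻¹
          * (P[fun ω => δ ω * Y ω | MeasurableSpace.comap X inferInstance]) ω :=
      condExp_stronglyMeasurable_mul_of_bound h𝓖 hpinv_meas.stronglyMeasurable hδYint c⁻¹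
        (Filter.Eventually.of_forall hpinv_bd)
    calc ∫ ω, δ ω / πstar (X ω) * Y ω ∂P
        = ∫ ω, (πstar (X ω))⁻¹ * (δ ω * Y ω) ∂P :=
          integral_congr_ae (Filter.Eventually.of_forall fun ω => by ring)
      _ = ∫ ω, (P[fun ω => (πstar (X ω))⁻¹ * (δ ω * Y ω)
            | MeasurableSpace.comap X inferInstance]) ω ∂P := (integral_condExp h𝓖).symm
      _ = ∫ ω, (πstar (X ω))⁻¹
            * (P[fun ω => δ ω * Y ω | MeasurableSpace.comap X inferInstance]) ω ∂P :=
          integral_congr_ae hpull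
      _ = ∫ ω, (πstar (X ω))⁻¹ * ((P[δ | MeasurableSpace.comap X inferInstance]) ω
            * (P[Y | MeasurableSpace.comap X inferInstance]) ω) ∂P := by
          refine integral_congr_ae ?_
          filter_upwards [key] with ω hω
          rw [hω]
  -- T3
  have hint3' : Integrable (fun ω => ((πstar (X ω))⁻¹ * mstar (X ω)) * δ ω) P :=
    hT3int.congr (Filter.Eventually.of_forall fun ω => by ring)
  have hT3eq : ∫ ω, δ ω / πstar (X ω) * mstar (X ω) ∂P
      = ∫ ω, ((πstar (X ω))⁻¹ * mstar (X ω))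
          * (P[δ | MeasurableSpace.comap X inferInstance]) ω ∂P := by
    have hpull : P[fun ω => ((πstar (X ω))⁻¹ * mstar (X ω)) * δ ω
          | MeasurableSpace.comap X inferInstance]
        =ᵐ[P] fun ω => ((πstar (X ω))⁻¹ * mstar (X ω))
          * (P[δ | MeasurableSpace.comap X inferInstance]) ω :=
      condExp_mul_of_stronglyMeasurable_left (hpinv_meas.mul hMG).stronglyMeasurable hint3' hδint
    calc ∫ ω, δ ω / πstar (X ω) * mstar (X ω) ∂P
        = ∫ ω, ((πstar (X ω))⁻¹ * mstar (X ω)) * δ ω ∂P :=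
          integral_congr_ae (Filter.Eventually.of_forall fun ω => by ring)
      _ = ∫ ω, (P[fun ω => ((πstar (X ω))⁻¹ * mstar (X ω)) * δ ω
            | MeasurableSpace.comap X inferInstance]) ω ∂P := (integral_condExp h𝓖).symm
      _ = ∫ ω, ((πstar (X ω))⁻¹ * mstar (X ω))
            * (P[δ | MeasurableSpace.comap X inferInstance]) ω ∂P := integral_congr_ae hpull
  rcases hDR with hπe | hme
  · -- correct propensity
    have hB : ∫ ω, (πstar (X ω))⁻¹ * ((P[δ | MeasurableSpace.comap X inferInstance]) ω
          * (P[Y | MeasurableSpace.comap X inferInstance]) ω) ∂P = ∫ ω, Y ω ∂P := by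
      have h' : ∫ ω, (πstar (X ω))⁻¹ * ((P[δ | MeasurableSpace.comap X inferInstance]) ω
            * (P[Y | MeasurableSpace.comap X inferInstance]) ω) ∂P
          = ∫ ω, (P[Y | MeasurableSpace.comap X inferInstance]) ω ∂P := by
        refine integral_congr_ae ?_
        filter_upwards [hπe] with ω hω
        rw [← hω, ← mul_assoc, inv_mul_cancel₀ (hpne ω), one_mul]
      rw [h', integral_condExp h𝓖]
    have hC : ∫ ω, ((πstar (X ω))⁻¹ * mstar (X ω))
          * (P[δ | MeasurableSpace.comap X inferInstance]) ω ∂P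
        = ∫ ω, mstar (X ω) ∂P := by
      refine integral_congr_ae ?_
      filter_upwards [hπe] with ω hω
      rw [← hω, mul_comm ((πstar (X ω))⁻¹) (mstar (X ω)), mul_assoc,
        inv_mul_cancel₀ (hpne ω), mul_one]
    rw [split, hT2eq, hT3eq, hB, hC]
    ring
  · -- correct regression
    have hBC : ∫ ω, (πstar (X ω))⁻¹ * ((P[δ | MeasurableSpace.comap X inferInstance]) ω
          * (P[Y | MeasurableSpace.comap X inferInstance]) ω) ∂P
        = ∫ ω, ((πstar (X ω))⁻¹ * mstar (X ω))
            * (P[δ | MeasurableSpace.comap X inferInstance]) ω ∂P := by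
      refine integral_congr_ae ?_
      filter_upwards [hme] with ω hω
      rw [← hω]
      ring
    have hA : ∫ ω, mstar (X ω) ∂P = ∫ ω, Y ω ∂P := by
      rw [integral_congr_ae hme, integral_condExp h𝓖]
    rw [split, hT2eq, hT3eq, hBC, sub_self, add_zero, hA]
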